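/- Let X be a k-dimensional subspace of F_q^n with identifying vector v(X) = (v_n,...,v_1) and RREF generator matrix with columns (X_n,...,X_1). Fix the first j columns (v_j,...,v_1; X_j,...,X_1) of the extended representation, and let w_j = ∑_{ℓ=1}^j v_ℓ. Then the number of k-dimensional subspaces of F_q^n whose extended representation agrees with X on the first j columns equals [n-j choose k-w_j]_q. -/

import Mathlib

open Finset

/-- The Gaussian binomial coefficient `[n choose k]_q`. -/
noncomputable def gaussQ (q n k : ℕ) : ℚ :=
  ∏ i ∈ Finset.range k, (((q : ℚ) ^ (n - i) - 1) / ((q : ℚ) ^ (k - i) - 1))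

/-- `M` is in reduced row echelon form with pivot columns `piv`. -/
def IsRREF {Fq : Type} [Field Fq] {k n : ℕ}
    (M : Matrix (Fin k) (Fin n) Fq) (piv : Fin k → Fin n) : Prop :=
  StrictMono piv ∧ (∀ i, M i (piv i) = 1) ∧
    (∀ i (j : Fin n), (j : ℕ) < (piv i : ℕ) → M i j = 0) ∧
    (∀ i i', i' ≠ i → M i' (piv i) = 0)

namespace RREFAux



lemma gaussQ_zero (q n : ℕ) : gaussQ q n 0 = 1 := by simp [gaussQ]

lemma gaussQ_of_lt {q n m : ℕ} (h : n < m) : gaussQ q n m = 0 := by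
  refine Finset.prod_eq_zero (Finset.mem_range.mpr h) ?_
  simp [Nat.sub_self]

lemma pow_sub_one_ne {q : ℕ} (hq : 2 ≤ q) {t : ℕ} (ht : t ≠ 0) : ((q:ℚ)^t - 1) ≠ 0 := by
  have h2 : (2:ℚ) ≤ (q:ℚ) := by exact_mod_cast hq
  have : (1:ℚ) < (q:ℚ)^t := by
    apply one_lt_pow₀ (by linarith) ht
  linarith

lemma gaussQ_self {q : ℕ} (hq : 2 ≤ q) (m : ℕ) : gaussQ q m m = 1 := by
  unfold gaussQ
  apply Finset.prod_eq_one
  intro i hi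
  rw [Finset.mem_range] at hi
  exact div_self (pow_sub_one_ne hq (by omega))

lemma gaussQ_eq_div (q n m : ℕ) :
    gaussQ q n m = (∏ i ∈ range m, ((q:ℚ)^(n-i) - 1)) / (∏ i ∈ range m, ((q:ℚ)^(m-i) - 1)) :=
  Finset.prod_div_distrib _ _

lemma den_ne {q : ℕ} (hq : 2 ≤ q) (m : ℕ) : (∏ i ∈ range m, ((q:ℚ)^(m-i) - 1)) ≠ 0 := by
  apply Finset.prod_ne_zero_iff.mpr
  intro i hi
  rw [Finset.mem_range] at hi
  exact pow_sub_one_ne hq (by omega)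

lemma gauss_rec (q r m' : ℕ) (hq : 2 ≤ q) :
    gaussQ q (r+1) (m'+1) = gaussQ q r (m'+1) + (q:ℚ)^(r - m') * gaussQ q r m' := by
  rcases lt_trichotomy r m' with h | rfl | h
  · rw [gaussQ_of_lt (by omega), gaussQ_of_lt (by omega), gaussQ_of_lt (by omega)]; ring
  · rw [gaussQ_self hq, gaussQ_of_lt (by omega), gaussQ_self hq]; simp
  · -- m' < r
    set A := ∏ i ∈ range m', ((q:ℚ)^(r-i) - 1) with hA
    set D := ∏ i ∈ range m', ((q:ℚ)^(m'-i) - 1) with hD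
    set E := ((q:ℚ)^(m'+1) - 1) with hE
    have hNum1 : (∏ i ∈ range (m'+1), ((q:ℚ)^(r+1-i) - 1)) = A * ((q:ℚ)^(r+1) - 1) := by
      rw [Finset.prod_range_succ']
      congr 1
      exact Finset.prod_congr rfl fun i hi => by congr 2; omega
    have hNum2 : (∏ i ∈ range (m'+1), ((q:ℚ)^(r-i) - 1)) = A * ((q:ℚ)^(r-m') - 1) := by
      rw [Finset.prod_range_succ]
    have hDen : (∏ i ∈ range (m'+1), ((q:ℚ)^(m'+1-i) - 1)) = D * E := by
      rw [Finset.prod_range_succ']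
      congr 1
      exact Finset.prod_congr rfl fun i hi => by congr 2; omega
    have hDne : D ≠ 0 := den_ne hq m'
    have hEne : E ≠ 0 := pow_sub_one_ne hq (by omega)
    have hpow : (q:ℚ)^(r-m') * (q:ℚ)^(m'+1) = (q:ℚ)^(r+1) := by
      rw [← pow_add]; congr 1; omega
    have key : A*((q:ℚ)^(r+1)-1) = A*((q:ℚ)^(r-m')-1) + ((q:ℚ)^(r-m') * A) * E := by
      rw [hE]; linear_combination -A * hpow
    rw [gaussQ_eq_div, gaussQ_eq_div, gaussQ_eq_div, hNum1, hNum2, hDen, ← hD]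
    rw [key, add_div]
    congr 1
    rw [mul_div_mul_right _ _ hEne, mul_div_assoc]

variable {Fq : Type} [Field Fq]

/-- Functions vanishing on the range of an injection `Fin m' ↪ Fin r`. -/
noncomputable def vanishEquiv {r m' : ℕ} {β : Type} [Zero β] (g : Fin m' → Fin r)
    (hg : Function.Injective g) :
    {f : Fin r → β // ∀ i, f (g i) = 0} ≃ (Fin (r - m') → β) := by
  classical
  set S : Finset (Fin r) := Finset.image g Finset.univ with hS
  have hcard : Sᶜ.card = r - m' := by
    rw [Finset.card_compl, hS, Finset.card_image_of_injective _ hg]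
    simp
  refine Equiv.trans ?_ (Equiv.arrowCongr (Finset.equivFinOfCardEq hcard) (Equiv.refl β))
  exact
  { toFun := fun f c => f.1 c.1
    invFun := fun h => ⟨fun c => if hc : c ∈ Sᶜ then h ⟨c, hc⟩ else 0, by
      intro i
      have hgi : g i ∈ S := Finset.mem_image_of_mem g (Finset.mem_univ i)
      simp [hgi]⟩
    left_inv := by
      intro f
      apply Subtype.ext
      funext c
      by_cases hc : c ∈ Sᶜ
      · simp [hc]
      · have hcS : c ∈ S := by simpa using hc
        rw [hS] at hcS
        obtain ⟨i, -, rfl⟩ := Finset.mem_image.mp hcS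
        simp [hc, f.2 i]
    right_inv := by
      intro h
      funext c
      simp }

lemma card_vanish {r m' : ℕ} [Fintype Fq] (g : Fin m' → Fin r) (hg : Function.Injective g) :
    Nat.card {f : Fin r → Fq // ∀ i, f (g i) = 0} = (Fintype.card Fq) ^ (r - m') := by
  rw [Nat.card_congr (vanishEquiv g hg), Nat.card_fun]
  simp [Nat.card_eq_fintype_card]

/-- Dropping the (all-zero) first column of an RREF matrix with no pivot in column 0. -/
lemma drop_isRREF {m r : ℕ} {N : Matrix (Fin m) (Fin (r+1)) Fq} {piv : Fin m → Fin (r+1)}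
    (h : IsRREF N piv) (hno : ∀ i, piv i ≠ 0)
    (piv2 : Fin m → Fin r) (hpiv2 : ∀ i, (piv2 i : ℕ) = (piv i : ℕ) - 1) :
    IsRREF (fun i c => N i c.succ) piv2 := by
  obtain ⟨hmono, hone, hleft, hcol⟩ := h
  have hpos : ∀ i, 1 ≤ (piv i : ℕ) := by
    intro i
    have := hno i
    have h0 : (piv i : ℕ) ≠ 0 := fun hh => this (Fin.ext hh)
    omega
  refine ⟨?_, ?_, ?_, ?_⟩
  · intro i i' hii
    have := hmono hii
    rw [Fin.lt_def] at this ⊢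
    rw [hpiv2 i, hpiv2 i']
    have := hpos i
    omega
  · intro i
    show N i (piv2 i).succ = 1
    have : (piv2 i).succ = piv i := by
      apply Fin.ext
      simp [hpiv2 i]
      have := hpos i
      omega
    rw [this]
    exact hone i
  · intro i c hc
    apply hleft
    rw [hpiv2 i] at hc
    have := hpos i
    simp
    omega
  · intro i i' hii
    show N i' (piv2 i).succ = 0
    have : (piv2 i).succ = piv i := by
      apply Fin.ext
      simp [hpiv2 i]
      have := hpos i
      omega
    rw [this]
    exact hcol i i' hii

/-- Prepending a zero column preserves RREF. -/
lemma extend_isRREF {m r : ℕ} {N' : Matrix (Fin m) (Fin r) Fq} {piv' : Fin m → Fin r}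
    (h : IsRREF N' piv')
    (N : Matrix (Fin m) (Fin (r+1)) Fq) (piv : Fin m → Fin (r+1))
    (hN0 : ∀ i, N i 0 = 0) (hNs : ∀ i c, N i c.succ = N' i c)
    (hpiv : ∀ i, (piv i : ℕ) = (piv' i : ℕ) + 1) :
    IsRREF N piv := by
  obtain ⟨hmono, hone, hleft, hcol⟩ := h
  have hps : ∀ i, piv i = (piv' i).succ := by
    intro i; apply Fin.ext; simp [hpiv i]
  refine ⟨?_, ?_, ?_, ?_⟩
  · intro i i' hii
    have := hmono hii
    rw [Fin.lt_def] at this ⊢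
    rw [hpiv i, hpiv i']
    omega
  · intro i
    rw [hps i, hNs]
    exact hone i
  · intro i c hc
    induction c using Fin.cases with
    | zero => exact hN0 i
    | succ c' =>
      rw [hNs]
      apply hleft
      rw [hpiv i] at hc
      simp at hc
      omega
  · intro i i' hii
    rw [hps i, hNs]
    exact hcol i i' hii

lemma card_no_pivot0 [Fintype Fq] (m r : ℕ) :
    Nat.card {p : Matrix (Fin m) (Fin (r+1)) Fq × (Fin m → Fin (r+1)) //
        IsRREF p.1 p.2 ∧ ¬ ∃ i, p.2 i = 0} =
    Nat.card {p : Matrix (Fin m) (Fin r) Fq × (Fin m → Fin r) // IsRREF p.1 p.2} := by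
  have hno : ∀ (x : {p : Matrix (Fin m) (Fin (r+1)) Fq × (Fin m → Fin (r+1)) //
      IsRREF p.1 p.2 ∧ ¬ ∃ i, p.2 i = 0}) (i : Fin m), x.1.2 i ≠ 0 := by
    intro x i hzero
    exact x.2.2 ⟨i, hzero⟩
  have hub : ∀ (x : {p : Matrix (Fin m) (Fin (r+1)) Fq × (Fin m → Fin (r+1)) //
      IsRREF p.1 p.2 ∧ ¬ ∃ i, p.2 i = 0}) (i : Fin m), (x.1.2 i : ℕ) - 1 < r := by
    intro x i
    have h1 := hno x i
    have h0 : (x.1.2 i : ℕ) ≠ 0 := fun hh => h1 (Fin.ext hh)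
    have h2 : (x.1.2 i : ℕ) < r + 1 := (x.1.2 i).2
    omega
  apply Nat.card_eq_of_bijective
    (fun x => ⟨((fun i c => x.1.1 i c.succ), fun i => ⟨(x.1.2 i : ℕ) - 1, hub x i⟩),
      drop_isRREF x.2.1 (hno x) _ (fun i => rfl)⟩)
  constructor
  · rintro x1 x2 heq
    rw [Subtype.ext_iff, Prod.ext_iff] at heq
    obtain ⟨hmat, hpiv⟩ := heq
    apply Subtype.ext
    apply Prod.ext
    · funext i c
      induction c using Fin.cases with
      | zero =>
        have e1 : x1.1.1 i 0 = 0 := by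
          apply x1.2.1.2.2.1 i 0
          have := hno x1 i
          have h0 : (x1.1.2 i : ℕ) ≠ 0 := fun hh => this (Fin.ext hh)
          simpa using Nat.pos_of_ne_zero h0
        have e2 : x2.1.1 i 0 = 0 := by
          apply x2.2.1.2.2.1 i 0
          have := hno x2 i
          have h0 : (x2.1.2 i : ℕ) ≠ 0 := fun hh => this (Fin.ext hh)
          simpa using Nat.pos_of_ne_zero h0
        rw [e1, e2]
      | succ c' =>
        exact congrFun (congrFun hmat i) c'
    · funext i
      have := congrFun hpiv i
      rw [Fin.ext_iff] at this ⊢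
      simp only at this
      have h1 : (x1.1.2 i : ℕ) ≠ 0 := fun hh => hno x1 i (Fin.ext hh)
      have h2 : (x2.1.2 i : ℕ) ≠ 0 := fun hh => hno x2 i (Fin.ext hh)
      omega
  · rintro ⟨⟨N', piv'⟩, hN'⟩
    have hlt : ∀ i, ((piv' i : ℕ) + 1) < r + 1 := fun i => by have := (piv' i).2; omega
    refine ⟨⟨((fun i c => Fin.cases 0 (N' i) c), fun i => ⟨(piv' i : ℕ) + 1, hlt i⟩), ?_, ?_⟩, ?_⟩
    · exact extend_isRREF hN' _ _ (fun i => rfl) (fun i c => rfl) (fun i => rfl)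
    · rintro ⟨i, hh⟩
      rw [Fin.ext_iff] at hh
      simp at hh
    · apply Subtype.ext
      apply Prod.ext
      · funext i c
        simp
      · funext i
        apply Fin.ext
        simp

section Pivot0
variable {m' r : ℕ}

lemma shrink_isRREF {N : Matrix (Fin (m'+1)) (Fin (r+1)) Fq} {piv : Fin (m'+1) → Fin (r+1)}
    (h : IsRREF N piv) (h0 : piv 0 = 0)
    (pivB : Fin m' → Fin r) (hpivB : ∀ i, (pivB i : ℕ) = (piv i.succ : ℕ) - 1) :
    IsRREF (fun i c => N i.succ c.succ) pivB := by
  obtain ⟨hmono, hone, hleft, hcol⟩ := h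
  have hpos : ∀ i : Fin m', 1 ≤ (piv i.succ : ℕ) := by
    intro i
    have h1 : piv 0 < piv i.succ := hmono (Fin.succ_pos i)
    rw [h0, Fin.lt_def] at h1
    simpa [Nat.one_le_iff_ne_zero, Nat.pos_iff_ne_zero] using h1
  have hps : ∀ i, (pivB i).succ = piv i.succ := by
    intro i
    apply Fin.ext
    have := hpos i
    simp [hpivB i]
    omega
  refine ⟨?_, ?_, ?_, ?_⟩
  · intro i i' hii
    have := hmono (Fin.succ_lt_succ_iff.mpr hii)
    rw [Fin.lt_def] at this ⊢
    rw [hpivB i, hpivB i']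
    have := hpos i
    omega
  · intro i
    show N i.succ (pivB i).succ = 1
    rw [hps i]
    exact hone i.succ
  · intro i c hc
    show N i.succ c.succ = 0
    apply hleft
    have := hpos i
    rw [hpivB i] at hc
    simp
    omega
  · intro i i' hii
    show N i'.succ (pivB i).succ = 0
    rw [hps i]
    exact hcol i.succ i'.succ (by simpa [Fin.succ_inj] using hii)

lemma expand_isRREF {B : Matrix (Fin m') (Fin r) Fq} {pivB : Fin m' → Fin r}
    (h : IsRREF B pivB) (f : Fin r → Fq) (hf : ∀ i, f (pivB i) = 0)
    (N : Matrix (Fin (m'+1)) (Fin (r+1)) Fq) (piv : Fin (m'+1) → Fin (r+1))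
    (hN00 : N 0 0 = 1) (hN0s : ∀ c, N 0 c.succ = f c)
    (hNs0 : ∀ i : Fin m', N i.succ 0 = 0) (hNss : ∀ i c, N i.succ c.succ = B i c)
    (hpiv0 : piv 0 = 0) (hpivs : ∀ i, (piv i.succ : ℕ) = (pivB i : ℕ) + 1) :
    IsRREF N piv := by
  obtain ⟨hmono, hone, hleft, hcol⟩ := h
  have hps : ∀ i, piv i.succ = (pivB i).succ := by
    intro i; apply Fin.ext; simp [hpivs i]
  refine ⟨?_, ?_, ?_, ?_⟩
  · intro i i' hii
    induction i using Fin.cases with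
    | zero =>
      induction i' using Fin.cases with
      | zero => exact absurd hii (lt_irrefl _)
      | succ i'' =>
        rw [Fin.lt_def, hpiv0, hpivs i'']
        simp
    | succ i'' =>
      induction i' using Fin.cases with
      | zero =>
        exact absurd hii (by rw [Fin.lt_def]; simp)
      | succ i''' =>
        rw [hps, hps, Fin.succ_lt_succ_iff]
        exact hmono (by rwa [Fin.succ_lt_succ_iff] at hii)
  · intro i
    induction i using Fin.cases with
    | zero => rw [hpiv0]; exact hN00
    | succ i'' => rw [hps, hNss]; exact hone i''
  · intro i c hc
    induction i using Fin.cases with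
    | zero =>
      rw [hpiv0] at hc
      simp at hc
    | succ i'' =>
      induction c using Fin.cases with
      | zero => exact hNs0 i''
      | succ c' =>
        rw [hNss]
        apply hleft
        rw [hps] at hc
        simp only [Fin.val_succ] at hc
        omega
  · intro i i' hii
    induction i using Fin.cases with
    | zero =>
      rw [hpiv0]
      induction i' using Fin.cases with
      | zero => exact absurd rfl hii
      | succ i''' => exact hNs0 i'''
    | succ i'' =>
      rw [hps]
      induction i' using Fin.cases with
      | zero => rw [hN0s]; exact hf i''
      | succ i''' =>
        rw [hNss]
        exact hcol i'' i''' (by simpa [Fin.succ_inj] using hii)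

lemma card_pivot0 [Fintype Fq] (m' r : ℕ) :
    Nat.card {p : Matrix (Fin (m'+1)) (Fin (r+1)) Fq × (Fin (m'+1) → Fin (r+1)) //
        IsRREF p.1 p.2 ∧ ∃ i, p.2 i = 0} =
    Nat.card {p : Matrix (Fin m') (Fin r) Fq × (Fin m' → Fin r) // IsRREF p.1 p.2}
      * (Fintype.card Fq) ^ (r - m') := by
  classical
  set T := {y : (Matrix (Fin m') (Fin r) Fq × (Fin m' → Fin r)) × (Fin r → Fq) //
      IsRREF y.1.1 y.1.2 ∧ ∀ i, y.2 (y.1.2 i) = 0} with hT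
  have hfirst : ∀ x : {p : Matrix (Fin (m'+1)) (Fin (r+1)) Fq × (Fin (m'+1) → Fin (r+1)) //
      IsRREF p.1 p.2 ∧ ∃ i, p.2 i = 0}, x.1.2 0 = 0 := by
    rintro ⟨p, hp, i0, hi0⟩
    rcases eq_or_ne i0 0 with rfl | hne
    · exact hi0
    · have h1 : p.2 0 < p.2 i0 := hp.1 (Fin.pos_of_ne_zero hne)
      rw [hi0, Fin.lt_def] at h1
      simp at h1
  have hpos : ∀ (x : {p : Matrix (Fin (m'+1)) (Fin (r+1)) Fq × (Fin (m'+1) → Fin (r+1)) //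
      IsRREF p.1 p.2 ∧ ∃ i, p.2 i = 0}) (i : Fin m'), 1 ≤ (x.1.2 i.succ : ℕ) := by
    intro x i
    have h1 : x.1.2 0 < x.1.2 i.succ := x.2.1.1 (Fin.succ_pos i)
    rw [hfirst x, Fin.lt_def] at h1
    simpa [Nat.one_le_iff_ne_zero, Nat.pos_iff_ne_zero] using h1
  have hub : ∀ (x : {p : Matrix (Fin (m'+1)) (Fin (r+1)) Fq × (Fin (m'+1) → Fin (r+1)) //
      IsRREF p.1 p.2 ∧ ∃ i, p.2 i = 0}) (i : Fin m'), (x.1.2 i.succ : ℕ) - 1 < r := by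
    intro x i
    have := hpos x i
    have h2 : (x.1.2 i.succ : ℕ) < r + 1 := (x.1.2 i.succ).2
    omega
  have step1 : Nat.card {p : Matrix (Fin (m'+1)) (Fin (r+1)) Fq × (Fin (m'+1) → Fin (r+1)) //
      IsRREF p.1 p.2 ∧ ∃ i, p.2 i = 0} = Nat.card T := by
    apply Nat.card_eq_of_bijective (fun x => ⟨(((fun i c => x.1.1 i.succ c.succ),
        fun i => ⟨(x.1.2 i.succ : ℕ) - 1, hub x i⟩), fun c => x.1.1 0 c.succ),
      shrink_isRREF x.2.1 (hfirst x) _ (fun i => rfl), by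
        intro i
        show x.1.1 0 (Fin.succ _) = 0
        have hps : (⟨(x.1.2 i.succ : ℕ) - 1, hub x i⟩ : Fin r).succ = x.1.2 i.succ := by
          apply Fin.ext
          have := hpos x i
          simp
          omega
        rw [hps]
        exact x.2.1.2.2.2 i.succ 0 (Fin.succ_ne_zero i).symm⟩)
    constructor
    · rintro x1 x2 heq
      rw [Subtype.ext_iff] at heq
      have hB : ∀ (i : Fin m') (c : Fin r), x1.1.1 i.succ c.succ = x2.1.1 i.succ c.succ :=
        fun i c => congrFun (congrFun (congrArg (fun y => y.1.1) heq) i) c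
      have hpivB : ∀ i : Fin m', (⟨(x1.1.2 i.succ : ℕ) - 1, hub x1 i⟩ : Fin r)
          = ⟨(x2.1.2 i.succ : ℕ) - 1, hub x2 i⟩ :=
        fun i => congrFun (congrArg (fun y => y.1.2) heq) i
      have hff : ∀ c : Fin r, x1.1.1 0 c.succ = x2.1.1 0 c.succ :=
        fun c => congrFun (congrArg (fun y => y.2) heq) c
      apply Subtype.ext
      apply Prod.ext
      · funext i c
        induction i using Fin.cases with
        | zero =>
          induction c using Fin.cases with
          | zero =>
            have e1 := x1.2.1.2.1 0
            rw [hfirst x1] at e1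
            have e2 := x2.2.1.2.1 0
            rw [hfirst x2] at e2
            rw [e1, e2]
          | succ c' => exact hff c'
        | succ i'' =>
          induction c using Fin.cases with
          | zero =>
            have e1 := x1.2.1.2.2.2 0 i''.succ (Fin.succ_ne_zero i'')
            rw [hfirst x1] at e1
            have e2 := x2.2.1.2.2.2 0 i''.succ (Fin.succ_ne_zero i'')
            rw [hfirst x2] at e2
            rw [e1, e2]
          | succ c' => exact hB i'' c'
      · funext i
        induction i using Fin.cases with
        | zero => rw [hfirst x1, hfirst x2]
        | succ i'' =>
          have h1 := hpos x1 i''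
          have h2 := hpos x2 i''
          have := congrArg Fin.val (hpivB i'')
          simp only at this
          apply Fin.ext
          omega
    · rintro ⟨⟨⟨B, pivB⟩, f⟩, hB, hf⟩
      have hlt : ∀ i : Fin m', ((pivB i : ℕ) + 1) < r + 1 := fun i => by
        have := (pivB i).2; omega
      refine ⟨⟨((fun i => Fin.cases (Fin.cases 1 f) (fun i'' => Fin.cases 0 (B i'')) i),
        fun i => Fin.cases 0 (fun i'' => ⟨(pivB i'' : ℕ) + 1, hlt i''⟩) i), ?_, ⟨0, by simp⟩⟩, ?_⟩
      · apply expand_isRREF hB f hf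
        · simp
        · intro c; simp
        · intro i; simp
        · intro i c; simp
        · simp
        · intro i; simp
      · apply Subtype.ext
        refine Prod.ext (Prod.ext ?_ ?_) ?_
        · funext i c; simp
        · funext i
          apply Fin.ext
          simp
        · funext c; simp
  have e1 : T ≃ Σ p : {p : Matrix (Fin m') (Fin r) Fq × (Fin m' → Fin r) // IsRREF p.1 p.2},
      {f : Fin r → Fq // ∀ i, f (p.1.2 i) = 0} :=
    { toFun := fun y => ⟨⟨y.1.1, y.2.1⟩, ⟨y.1.2, y.2.2⟩⟩
      invFun := fun s => ⟨(s.1.1, s.2.1), s.1.2, s.2.2⟩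
      left_inv := fun y => rfl
      right_inv := fun s => rfl }
  have e2 := Equiv.sigmaCongrRight
    (fun p : {p : Matrix (Fin m') (Fin r) Fq × (Fin m' → Fin r) // IsRREF p.1 p.2} =>
      vanishEquiv (β := Fq) p.1.2 p.2.1.injective)
  rw [step1, Nat.card_congr ((e1.trans e2).trans (Equiv.sigmaEquivProd _ _)), Nat.card_prod,
    Nat.card_fun]
  simp [Nat.card_eq_fintype_card]
end Pivot0

lemma card_RREFs_zero_rows [Fintype Fq] (r : ℕ) :
    Nat.card {p : Matrix (Fin 0) (Fin r) Fq × (Fin 0 → Fin r) // IsRREF p.1 p.2} = 1 := by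
  rw [Nat.card_eq_one_iff_unique]
  constructor
  · constructor
    rintro ⟨⟨N1, p1⟩, -⟩ ⟨⟨N2, p2⟩, -⟩
    apply Subtype.ext
    refine Prod.ext ?_ ?_
    · funext i; exact i.elim0
    · funext i; exact i.elim0
  · exact ⟨⟨(fun i => i.elim0, fun i => i.elim0),
      ⟨fun a => a.elim0, fun i => i.elim0, fun i => i.elim0, fun i => i.elim0⟩⟩⟩

lemma card_RREFs [Fintype Fq] (r m : ℕ) :
    (Nat.card {p : Matrix (Fin m) (Fin r) Fq × (Fin m → Fin r) // IsRREF p.1 p.2} : ℚ)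
      = gaussQ (Fintype.card Fq) r m := by
  have hq : 2 ≤ Fintype.card Fq := Fintype.one_lt_card
  induction r generalizing m with
  | zero =>
    match m with
    | 0 => rw [card_RREFs_zero_rows, gaussQ_zero]; norm_num
    | m' + 1 =>
      haveI : IsEmpty {p : Matrix (Fin (m'+1)) (Fin 0) Fq × (Fin (m'+1) → Fin 0) //
          IsRREF p.1 p.2} := ⟨fun x => (x.1.2 0).elim0⟩
      rw [Nat.card_of_isEmpty, gaussQ_of_lt (Nat.succ_pos m')]
      norm_num
  | succ r ih =>
    match m with
    | 0 => rw [card_RREFs_zero_rows, gaussQ_zero]; norm_num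
    | m' + 1 =>
      classical
      have hsplit : Nat.card {p : Matrix (Fin (m'+1)) (Fin (r+1)) Fq ×
            (Fin (m'+1) → Fin (r+1)) // IsRREF p.1 p.2}
          = Nat.card {p : Matrix (Fin (m'+1)) (Fin (r+1)) Fq × (Fin (m'+1) → Fin (r+1)) //
              IsRREF p.1 p.2 ∧ ∃ i, p.2 i = 0}
            + Nat.card {p : Matrix (Fin (m'+1)) (Fin (r+1)) Fq × (Fin (m'+1) → Fin (r+1)) //
              IsRREF p.1 p.2 ∧ ¬ ∃ i, p.2 i = 0} := by
        rw [← Nat.card_sum]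
        apply Nat.card_congr
        exact (Equiv.sumCompl
          (fun x : {p : Matrix (Fin (m'+1)) (Fin (r+1)) Fq × (Fin (m'+1) → Fin (r+1)) //
            IsRREF p.1 p.2} => ∃ i, x.1.2 i = 0)).symm.trans
          (Equiv.sumCongr (Equiv.subtypeSubtypeEquivSubtypeInter
              (fun p : Matrix (Fin (m'+1)) (Fin (r+1)) Fq × (Fin (m'+1) → Fin (r+1)) =>
                IsRREF p.1 p.2) (fun p => ∃ i, p.2 i = 0))
            (Equiv.subtypeSubtypeEquivSubtypeInter
              (fun p : Matrix (Fin (m'+1)) (Fin (r+1)) Fq × (Fin (m'+1) → Fin (r+1)) =>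
                IsRREF p.1 p.2) (fun p => ¬ ∃ i, p.2 i = 0)))
      rw [hsplit, card_pivot0 m' r, card_no_pivot0 (m'+1) r]
      push_cast
      rw [ih m', ih (m'+1), gauss_rec _ _ _ hq]
      ring

section Unique
variable {k n : ℕ}


lemma combo_eval_piv {N : Matrix (Fin k) (Fin n) Fq} {piv : Fin k → Fin n}
    (h : IsRREF N piv) (c : Fin k → Fq) (i : Fin k) :
    (∑ i', c i' • N i') (piv i) = c i := by
  rw [Finset.sum_apply]
  rw [Finset.sum_eq_single i]
  · simp [h.2.1 i]
  · intro b _ hb; simp [h.2.2.2 i b hb]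
  · simp

lemma combo_eval_lt {N : Matrix (Fin k) (Fin n) Fq} {piv : Fin k → Fin n}
    (h : IsRREF N piv) (c : Fin k → Fq) (i0 : Fin k)
    (hc : ∀ i, i < i0 → c i = 0) (col : Fin n) (hcol : (col:ℕ) < (piv i0 : ℕ)) :
    (∑ i', c i' • N i') col = 0 := by
  rw [Finset.sum_apply]
  apply Finset.sum_eq_zero
  intro i _
  rcases lt_or_ge i i0 with h1 | h1
  · simp [hc i h1]
  · have h2 : (col:ℕ) < (piv i : ℕ) := lt_of_lt_of_le hcol (h.1.monotone h1)
    simp [h.2.2.1 i col h2]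

lemma range_piv_subset {N N' : Matrix (Fin k) (Fin n) Fq} {piv piv' : Fin k → Fin n}
    (h : IsRREF N piv) (h' : IsRREF N' piv')
    (hs : Submodule.span Fq (Set.range fun i => N i) ≤ Submodule.span Fq (Set.range fun i => N' i)) :
    Set.range piv ⊆ Set.range piv' := by
  classical
  rintro _ ⟨i, rfl⟩
  have hmem : N i ∈ Submodule.span Fq (Set.range fun i => N' i) :=
    hs (Submodule.subset_span ⟨i, rfl⟩)
  rw [Submodule.mem_span_range_iff_exists_fun] at hmem
  obtain ⟨c, hc⟩ := hmem
  have hSne : (Finset.univ.filter (fun j => c j ≠ 0)).Nonempty := by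
    by_contra hno
    rw [Finset.not_nonempty_iff_eq_empty, Finset.filter_eq_empty_iff] at hno
    have hz : N i = 0 := by
      rw [← hc]
      apply Finset.sum_eq_zero
      intro j _
      have := hno (Finset.mem_univ j)
      simp only [ne_eq, not_not] at this
      simp [this]
    have h1 := h.2.1 i
    rw [hz] at h1
    simp at h1
  set j0 := (Finset.univ.filter (fun j => c j ≠ 0)).min' hSne with hj0def
  have hj0 : c j0 ≠ 0 := (Finset.mem_filter.mp (Finset.min'_mem _ hSne)).2
  have hmin : ∀ jj, jj < j0 → c jj = 0 := by
    intro jj hjj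
    by_contra hne
    exact absurd (Finset.min'_le _ jj (by simp [hne])) (not_le.mpr hjj)
  have e1 : N i (piv' j0) = c j0 := by rw [← hc]; exact combo_eval_piv h' c j0
  rcases lt_trichotomy ((piv i : ℕ)) ((piv' j0 : ℕ)) with hlt | heq | hgt
  · have e2 : N i (piv i) = 0 := by
      rw [← hc]; exact combo_eval_lt h' c j0 hmin (piv i) hlt
    rw [h.2.1 i] at e2
    exact absurd e2 one_ne_zero
  · exact ⟨j0, (Fin.ext heq).symm⟩
  · rw [h.2.2.1 i (piv' j0) hgt] at e1
    exact absurd e1.symm hj0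

lemma rref_unique {N N' : Matrix (Fin k) (Fin n) Fq} {piv piv' : Fin k → Fin n}
    (h : IsRREF N piv) (h' : IsRREF N' piv')
    (hs : Submodule.span Fq (Set.range fun i => N i) = Submodule.span Fq (Set.range fun i => N' i)) :
    N = N' ∧ piv = piv' := by
  have hr : Set.range piv = Set.range piv' :=
    Set.Subset.antisymm (range_piv_subset h h' hs.le) (range_piv_subset h' h hs.ge)
  have hp : piv = piv' := (StrictMono.range_inj h.1 h'.1).mp hr
  subst hp
  refine ⟨?_, rfl⟩
  have key : ∀ i, N i = N' i := by
    intro i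
    have hmem : N i ∈ Submodule.span Fq (Set.range fun i => N' i) :=
      hs ▸ Submodule.subset_span ⟨i, rfl⟩
    rw [Submodule.mem_span_range_iff_exists_fun] at hmem
    obtain ⟨c, hc⟩ := hmem
    have hcj : ∀ jj, c jj = N i (piv jj) := by
      intro jj
      rw [← hc]
      exact (combo_eval_piv h' c jj).symm
    have hdelta : ∀ jj, c jj = if jj = i then 1 else 0 := by
      intro jj
      rw [hcj jj]
      split
      · next hh => subst hh; exact h.2.1 jj
      · next hh => exact h.2.2.2 jj i (Ne.symm hh) -- careful: want N i (piv jj) = 0 for jj ≠ i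
    rw [← hc]
    rw [Finset.sum_eq_single i]
    · rw [hdelta i]; simp
    · intro b _ hb; rw [hdelta b]; simp [hb]
    · simp
  ext i col
  exact congrFun (key i) col

end Unique


section Prefix
variable {n k j : ℕ}

lemma upperset_mem_iff {k : ℕ} (S : Finset (Fin k))
    (hup : ∀ a b : Fin k, a ≤ b → a ∈ S → b ∈ S) (i : Fin k) :
    i ∈ S ↔ k - S.card ≤ (i : ℕ) := by
  have hw : S.card ≤ k := le_trans (Finset.card_le_univ S) (by simp)
  have hik : (i:ℕ) < k := i.2
  constructor
  · intro hi
    by_contra hlt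
    push_neg at hlt
    have hsub : Finset.Ici i ⊆ S := fun b hb => hup i b (Finset.mem_Ici.mp hb) hi
    have := Finset.card_le_card hsub
    rw [Fin.card_Ici] at this
    omega
  · intro hge
    by_contra hni
    have hsub : S ⊆ Finset.Ioi i := by
      intro b hb
      rw [Finset.mem_Ioi]
      rcases le_or_gt b i with hle | hlt
      · exact absurd (hup b i hle hb) hni
      · exact hlt
    have := Finset.card_le_card hsub
    rw [Fin.card_Ioi] at this
    omega

/-- Pivot positions above a threshold occupy the last rows. -/
lemma tail_iff {pv : Fin k → Fin n} (hmono : StrictMono pv) {w : ℕ}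
    (hw : (Finset.univ.filter fun i => n - j ≤ (pv i : ℕ)).card = w) (i : Fin k) :
    n - j ≤ (pv i : ℕ) ↔ k - w ≤ (i : ℕ) := by
  classical
  have := upperset_mem_iff (Finset.univ.filter fun i => n - j ≤ (pv i : ℕ))
    (fun a b hab ha => by
      rw [Finset.mem_filter] at ha ⊢
      exact ⟨Finset.mem_univ b, le_trans ha.2 (hmono.monotone hab)⟩) i
  rw [hw, Finset.mem_filter] at this
  simpa using this

lemma filter_card_eq {pv pv' : Fin k → Fin n}
    (hmono : StrictMono pv) (hmono' : StrictMono pv')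
    (hiff : ∀ c : Fin n, n - j ≤ (c:ℕ) → ((∃ i, pv' i = c) ↔ (∃ i, pv i = c))) :
    (Finset.univ.filter fun i => n - j ≤ (pv' i : ℕ)).card
      = (Finset.univ.filter fun i => n - j ≤ (pv i : ℕ)).card := by
  classical
  have himg : ∀ g : Fin k → Fin n, Finset.image g (Finset.univ.filter fun i => n - j ≤ (g i:ℕ))
      = Finset.univ.filter (fun c : Fin n => n - j ≤ (c:ℕ) ∧ ∃ i, g i = c) := by
    intro g
    ext c
    simp only [Finset.mem_image, Finset.mem_filter, Finset.mem_univ, true_and]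
    constructor
    · rintro ⟨i, hle, rfl⟩
      exact ⟨hle, i, rfl⟩
    · rintro ⟨hle, i, rfl⟩
      exact ⟨i, hle, rfl⟩
  have hfc : Finset.univ.filter (fun c : Fin n => n - j ≤ (c:ℕ) ∧ ∃ i, pv' i = c)
      = Finset.univ.filter (fun c : Fin n => n - j ≤ (c:ℕ) ∧ ∃ i, pv i = c) := by
    apply Finset.filter_congr
    intro c _
    exact and_congr_right fun hle => hiff c hle
  calc (Finset.univ.filter fun i => n - j ≤ (pv' i : ℕ)).card
      = (Finset.image pv' (Finset.univ.filter fun i => n - j ≤ (pv' i:ℕ))).card :=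
        (Finset.card_image_of_injective _ hmono'.injective).symm
    _ = (Finset.univ.filter (fun c : Fin n => n - j ≤ (c:ℕ) ∧ ∃ i, pv' i = c)).card := by
        rw [himg pv']
    _ = (Finset.univ.filter (fun c : Fin n => n - j ≤ (c:ℕ) ∧ ∃ i, pv i = c)).card := by
        rw [hfc]
    _ = (Finset.image pv (Finset.univ.filter fun i => n - j ≤ (pv i:ℕ))).card := by
        rw [himg pv]
    _ = _ := Finset.card_image_of_injective _ hmono.injective

/-- Pivots in the agreed zone coincide. -/
lemma tail_agree {pv pv' : Fin k → Fin n}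
    (hmono : StrictMono pv) (hmono' : StrictMono pv') {w : ℕ} (hwk : w ≤ k)
    (hw : (Finset.univ.filter fun i => n - j ≤ (pv i : ℕ)).card = w)
    (hw' : (Finset.univ.filter fun i => n - j ≤ (pv' i : ℕ)).card = w)
    (hiff : ∀ c : Fin n, n - j ≤ (c:ℕ) → ((∃ i, pv' i = c) ↔ (∃ i, pv i = c)))
    (i : Fin k) (hi : k - w ≤ (i:ℕ)) : pv' i = pv i := by
  have htail := tail_iff (j := j) hmono hw
  have htail' := tail_iff (j := j) hmono' hw'
  have hkw : ∀ t : Fin w, k - w + (t:ℕ) < k := fun t => by have := t.2; omega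
  set e : Fin w → Fin k := fun t => ⟨k - w + t, hkw t⟩ with he
  have hemono : StrictMono e := fun a b hab => by
    rw [Fin.lt_def] at hab ⊢
    simp [he]
    omega
  have hrange : ∀ (g : Fin k → Fin n), StrictMono g →
      ((Finset.univ.filter fun i => n - j ≤ (g i : ℕ)).card = w) →
      Set.range (g ∘ e) = {c : Fin n | n - j ≤ (c:ℕ) ∧ ∃ i, g i = c} := by
    intro g hg hcard
    have ht := tail_iff (j := j) hg hcard
    ext c
    constructor
    · rintro ⟨t, rfl⟩
      refine ⟨(ht (e t)).mpr ?_, e t, rfl⟩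
      simp [he]
    · rintro ⟨hle, i', rfl⟩
      have hge : k - w ≤ (i':ℕ) := (ht i').mp hle
      have hlt : (i':ℕ) - (k - w) < w := by have := i'.2; omega
      refine ⟨⟨(i':ℕ) - (k - w), hlt⟩, ?_⟩
      simp only [Function.comp_apply]
      congr 1
      apply Fin.ext
      simp [he]
      omega
  have hre : Set.range (pv' ∘ e) = Set.range (pv ∘ e) := by
    rw [hrange pv' hmono' hw', hrange pv hmono hw]
    ext c
    exact and_congr_right fun hle => hiff c hle
  have heq : pv' ∘ e = pv ∘ e :=
    (StrictMono.range_inj (hmono'.comp hemono) (hmono.comp hemono)).mp hre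
  have hlt : (i:ℕ) - (k - w) < w := by have := i.2; omega
  have : e ⟨(i:ℕ) - (k - w), hlt⟩ = i := by
    apply Fin.ext
    simp [he]
    omega
  have h2 : pv' (e ⟨(i:ℕ) - (k - w), hlt⟩) = pv (e ⟨(i:ℕ) - (k - w), hlt⟩) :=
    congrFun heq _
  rw [this] at h2
  exact h2

lemma restrict_isRREF {N : Matrix (Fin k) (Fin n) Fq} {piv' : Fin k → Fin n}
    (h : IsRREF N piv') {w : ℕ}
    (B : Matrix (Fin (k - w)) (Fin (n - j)) Fq) (pivB : Fin (k - w) → Fin (n - j))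
    (hB : ∀ (i : Fin (k - w)) (c : Fin (n - j)),
      B i c = N (Fin.castLE (Nat.sub_le k w) i) (Fin.castLE (Nat.sub_le n j) c))
    (hpivB : ∀ i, (pivB i : ℕ) = (piv' (Fin.castLE (Nat.sub_le k w) i) : ℕ)) :
    IsRREF B pivB := by
  obtain ⟨hmono, hone, hleft, hcol⟩ := h
  refine ⟨?_, ?_, ?_, ?_⟩
  · intro a b hab
    rw [Fin.lt_def, hpivB, hpivB]
    have : Fin.castLE (Nat.sub_le k w) a < Fin.castLE (Nat.sub_le k w) b := by
      rw [Fin.lt_def] at hab ⊢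
      simpa using hab
    exact hmono this
  · intro i
    rw [hB]
    have : Fin.castLE (Nat.sub_le n j) (pivB i) = piv' (Fin.castLE (Nat.sub_le k w) i) := by
      apply Fin.ext
      simpa using hpivB i
    rw [this]
    exact hone _
  · intro i c hc
    rw [hB]
    apply hleft
    rw [hpivB] at hc
    simpa using hc
  · intro i i' hii
    rw [hB]
    have : Fin.castLE (Nat.sub_le n j) (pivB i) = piv' (Fin.castLE (Nat.sub_le k w) i) := by
      apply Fin.ext
      simpa using hpivB i
    rw [this]
    apply hcol
    intro hcon
    exact hii (by
      apply Fin.ext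
      have := congrArg Fin.val hcon
      simpa using this)
end Prefix


lemma card_prefix [Fintype Fq] {n k j : ℕ} {M : Matrix (Fin k) (Fin n) Fq} {piv : Fin k → Fin n}
    (hM : IsRREF M piv) :
    Nat.card {p : Matrix (Fin k) (Fin n) Fq × (Fin k → Fin n) //
      IsRREF p.1 p.2 ∧ ∀ c : Fin n, n - j ≤ (c:ℕ) →
        (((∃ i, p.2 i = c) ↔ (∃ i, piv i = c)) ∧ ∀ i, p.1 i c = M i c)}
    = Nat.card {p : Matrix (Fin (k - (Finset.univ.filter (fun i => n - j ≤ (piv i : ℕ))).card))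
        (Fin (n - j)) Fq × (Fin (k - (Finset.univ.filter (fun i => n - j ≤ (piv i : ℕ))).card)
        → Fin (n - j)) // IsRREF p.1 p.2} := by
  classical
  set w := (Finset.univ.filter (fun i => n - j ≤ (piv i : ℕ))).card with hwdef
  have hwk : w ≤ k := by
    rw [hwdef]
    have := Finset.card_filter_le Finset.univ (fun i : Fin k => n - j ≤ (piv i : ℕ))
    simpa using this
  have htailM : ∀ i : Fin k, n - j ≤ (piv i : ℕ) ↔ k - w ≤ (i:ℕ) := tail_iff hM.1 hwdef.symm
  have hmem : ∀ (N : Matrix (Fin k) (Fin n) Fq) (piv' : Fin k → Fin n), IsRREF N piv' →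
      (∀ c : Fin n, n - j ≤ (c:ℕ) →
        (((∃ i, piv' i = c) ↔ (∃ i, piv i = c)) ∧ ∀ i, N i c = M i c)) →
      (∀ i : Fin k, n - j ≤ (piv' i : ℕ) ↔ k - w ≤ (i:ℕ)) ∧
        (∀ i : Fin k, k - w ≤ (i:ℕ) → piv' i = piv i) := by
    intro N piv' h hpre
    have hw' : (Finset.univ.filter fun i => n - j ≤ (piv' i : ℕ)).card = w :=
      (filter_card_eq hM.1 h.1 (fun c hc => (hpre c hc).1)).trans hwdef.symm
    exact ⟨tail_iff h.1 hw',
      fun i hi => tail_agree hM.1 h.1 hwk hwdef.symm hw' (fun c hc => (hpre c hc).1) i hi⟩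
  have hublt : ∀ (x : {p : Matrix (Fin k) (Fin n) Fq × (Fin k → Fin n) //
      IsRREF p.1 p.2 ∧ ∀ c : Fin n, n - j ≤ (c:ℕ) →
        (((∃ i, p.2 i = c) ↔ (∃ i, piv i = c)) ∧ ∀ i, p.1 i c = M i c)})
      (i : Fin (k - w)), (x.1.2 (Fin.castLE (Nat.sub_le k w) i) : ℕ) < n - j := by
    intro x i
    have h1 := ((hmem x.1.1 x.1.2 x.2.1 x.2.2).1 (Fin.castLE (Nat.sub_le k w) i))
    have h2 : ¬ (k - w ≤ ((Fin.castLE (Nat.sub_le k w) i : Fin k) : ℕ)) := by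
      have := i.2
      simp only [Fin.coe_castLE]
      omega
    have h3 := fun hle => h2 (h1.mp hle)
    omega
  apply Nat.card_eq_of_bijective (fun x =>
    ⟨((fun i c => x.1.1 (Fin.castLE (Nat.sub_le k w) i) (Fin.castLE (Nat.sub_le n j) c)),
      fun i => ⟨(x.1.2 (Fin.castLE (Nat.sub_le k w) i) : ℕ), hublt x i⟩),
      restrict_isRREF x.2.1 _ _ (fun i c => rfl) (fun i => rfl)⟩)
  constructor
  · rintro x1 x2 heq
    rw [Subtype.ext_iff] at heq
    have hBeq : ∀ (i : Fin (k - w)) (c : Fin (n - j)),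
        x1.1.1 (Fin.castLE (Nat.sub_le k w) i) (Fin.castLE (Nat.sub_le n j) c)
          = x2.1.1 (Fin.castLE (Nat.sub_le k w) i) (Fin.castLE (Nat.sub_le n j) c) :=
      fun i c => congrFun (congrFun (congrArg (fun y => y.1) heq) i) c
    have hPeq : ∀ i : Fin (k - w),
        (x1.1.2 (Fin.castLE (Nat.sub_le k w) i) : ℕ)
          = (x2.1.2 (Fin.castLE (Nat.sub_le k w) i) : ℕ) :=
      by
        intro i
        have h := congrFun (congrArg Prod.snd heq) i
        simpa using h
    have hm1 := hmem x1.1.1 x1.1.2 x1.2.1 x1.2.2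
    have hm2 := hmem x2.1.1 x2.1.2 x2.2.1 x2.2.2
    have hpiv12 : x1.1.2 = x2.1.2 := by
      funext i
      rcases lt_or_ge ((i:ℕ)) (k - w) with hlt | hle
      · have := hPeq ⟨(i:ℕ), hlt⟩
        apply Fin.ext
        simpa using this
      · rw [hm1.2 i hle, hm2.2 i hle]
    apply Subtype.ext
    apply Prod.ext
    · funext i c
      rcases lt_or_ge ((c:ℕ)) (n - j) with hclt | hcle
      · rcases lt_or_ge ((i:ℕ)) (k - w) with hilt | hile
        · have := hBeq ⟨(i:ℕ), hilt⟩ ⟨(c:ℕ), hclt⟩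
          simpa using this
        · -- row in the tail: entry left of pivot is 0 in both
          have hp1 : n - j ≤ (x1.1.2 i : ℕ) := (hm1.1 i).mpr hile
          have hp2 : n - j ≤ (x2.1.2 i : ℕ) := (hm2.1 i).mpr hile
          rw [x1.2.1.2.2.1 i c (by omega), x2.2.1.2.2.1 i c (by omega)]
      · rw [(x1.2.2 c hcle).2 i, (x2.2.2 c hcle).2 i]
    · exact hpiv12
  · rintro ⟨⟨B, pivB⟩, hB⟩
    have hpblt : ∀ t : Fin (k - w), ((pivB t : ℕ)) < n - j := fun t => (pivB t).2
    set N : Matrix (Fin k) (Fin n) Fq := fun i c =>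
      if h1 : (i:ℕ) < k - w then
        (if h2 : (c:ℕ) < n - j then B ⟨(i:ℕ), h1⟩ ⟨(c:ℕ), h2⟩ else M i c)
      else M i c with hN
    set piv' : Fin k → Fin n := fun i =>
      if h1 : (i:ℕ) < k - w then Fin.castLE (Nat.sub_le n j) (pivB ⟨(i:ℕ), h1⟩) else piv i
      with hp'
    have hpivtail : ∀ i : Fin k, ¬ ((i:ℕ) < k - w) → piv' i = piv i := by
      intro i hi
      simp only [hp']
      rw [dif_neg hi]
    have hpivhead : ∀ (i : Fin k) (h1 : (i:ℕ) < k - w),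
        piv' i = Fin.castLE (Nat.sub_le n j) (pivB ⟨(i:ℕ), h1⟩) := by
      intro i h1
      simp only [hp']
      rw [dif_pos h1]
    have hNtail : ∀ (i : Fin k) (c : Fin n), n - j ≤ (c:ℕ) → N i c = M i c := by
      intro i c hc
      simp only [hN]
      split_ifs with h1 h2
      · omega
      · rfl
      · rfl
    have hNhead : ∀ (i : Fin k) (c : Fin n) (h1 : (i:ℕ) < k - w) (h2 : (c:ℕ) < n - j),
        N i c = B ⟨(i:ℕ), h1⟩ ⟨(c:ℕ), h2⟩ := by
      intro i c h1 h2
      simp only [hN]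
      rw [dif_pos h1, dif_pos h2]
    have hNlow : ∀ (i : Fin k) (c : Fin n), ¬ ((i:ℕ) < k - w) → N i c = M i c := by
      intro i c h1
      simp only [hN]
      rw [dif_neg h1]
    have hRREF : IsRREF N piv' := by
      obtain ⟨hmono, hone, hleft, hcol⟩ := hM
      obtain ⟨hmonoB, honeB, hleftB, hcolB⟩ := hB
      refine ⟨?_, ?_, ?_, ?_⟩
      · intro a b hab
        have habv : (a:ℕ) < (b:ℕ) := hab
        rcases lt_or_ge ((a:ℕ)) (k - w) with ha | ha
        · rcases lt_or_ge ((b:ℕ)) (k - w) with hb | hb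
          · rw [hpivhead a ha, hpivhead b hb, Fin.lt_def]
            simp only [Fin.coe_castLE]
            exact hmonoB (show (⟨(a:ℕ), ha⟩ : Fin (k - w)) < ⟨(b:ℕ), hb⟩ from habv)
          · rw [hpivhead a ha, hpivtail b (by omega), Fin.lt_def]
            have h2 : n - j ≤ (piv b : ℕ) := (htailM b).mpr (by omega)
            have h3 := hpblt ⟨(a:ℕ), ha⟩
            simp only [Fin.coe_castLE]
            omega
        · rcases lt_or_ge ((b:ℕ)) (k - w) with hb | hb
          · omega
          · rw [hpivtail a (by omega), hpivtail b (by omega)]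
            exact hmono hab
      · intro i
        rcases lt_or_ge ((i:ℕ)) (k - w) with hi | hi
        · rw [hpivhead i hi]
          rw [hNhead i _ hi (by simp [hpblt])]
          have : (⟨((Fin.castLE (Nat.sub_le n j) (pivB ⟨(i:ℕ), hi⟩) : Fin n) : ℕ),
              by simp [hpblt]⟩ : Fin (n - j)) = pivB ⟨(i:ℕ), hi⟩ := by
            apply Fin.ext
            simp
          rw [this]
          exact honeB _
        · rw [hpivtail i (by omega), hNlow i _ (by omega)]
          exact hone i
      · intro i c hc
        rcases lt_or_ge ((i:ℕ)) (k - w) with hi | hi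
        · rw [hpivhead i hi] at hc
          have hcv : (c:ℕ) < (pivB ⟨(i:ℕ), hi⟩ : ℕ) := by simpa using hc
          have hcn : (c:ℕ) < n - j := lt_trans hcv (hpblt _)
          rw [hNhead i c hi hcn]
          exact hleftB _ _ hcv
        · rw [hpivtail i (by omega)] at hc
          rw [hNlow i c (by omega)]
          exact hleft i c hc
      · intro i i' hii
        rcases lt_or_ge ((i:ℕ)) (k - w) with hi | hi
        · rw [hpivhead i hi]
          rcases lt_or_ge ((i':ℕ)) (k - w) with hi' | hi'
          · rw [hNhead i' _ hi' (by simp [hpblt])]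
            have : (⟨((Fin.castLE (Nat.sub_le n j) (pivB ⟨(i:ℕ), hi⟩) : Fin n) : ℕ),
                by simp [hpblt]⟩ : Fin (n - j)) = pivB ⟨(i:ℕ), hi⟩ := by
              apply Fin.ext
              simp
            rw [this]
            apply hcolB
            intro hcon
            apply hii
            apply Fin.ext
            have := congrArg Fin.val hcon
            simpa using this
          · rw [hNlow i' _ (by omega)]
            apply hleft
            have h2 : n - j ≤ (piv i' : ℕ) := (htailM i').mpr (by omega)
            have h3 := hpblt ⟨(i:ℕ), hi⟩
            simp only [Fin.coe_castLE]
            omega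
        · rw [hpivtail i (by omega)]
          have h2 : n - j ≤ (piv i : ℕ) := (htailM i).mpr (by omega)
          rw [hNtail i' _ h2]
          exact hcol i i' hii
    have hpre : ∀ c : Fin n, n - j ≤ (c:ℕ) →
        (((∃ i, piv' i = c) ↔ (∃ i, piv i = c)) ∧ ∀ i, N i c = M i c) := by
      intro c hc
      constructor
      · constructor
        · rintro ⟨i, rfl⟩
          rcases lt_or_ge ((i:ℕ)) (k - w) with hi | hi
          · rw [hpivhead i hi] at hc
            have := hpblt ⟨(i:ℕ), hi⟩
            simp only [Fin.coe_castLE] at hc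
            omega
          · exact ⟨i, (hpivtail i (by omega)).symm⟩
        · rintro ⟨i, rfl⟩
          have hi : k - w ≤ (i:ℕ) := (htailM i).mp hc
          exact ⟨i, hpivtail i (by omega)⟩
      · intro i
        exact hNtail i c hc
    refine ⟨⟨(N, piv'), hRREF, hpre⟩, ?_⟩
    apply Subtype.ext
    apply Prod.ext
    · funext i c
      show N (Fin.castLE (Nat.sub_le k w) i) (Fin.castLE (Nat.sub_le n j) c) = B i c
      rw [hNhead _ _ (by simpa using i.2) (by simpa using c.2)]
      congr 1 <;> (apply Fin.ext; simp)
    · funext i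
      apply Fin.ext
      show ((piv' (Fin.castLE (Nat.sub_le k w) i)) : ℕ) = (pivB i : ℕ)
      rw [hpivhead _ (by simpa using i.2)]
      simp

end RREFAux

open scoped Classical in
/-- Fix a `k`-dimensional subspace `X` of `F_q^n` with RREF matrix `M` and pivots `piv`.
The number of `k`-dimensional subspaces `Y` of `F_q^n` whose extended representation
(identifying vector stacked over RREF) agrees with that of `X` on the first `j` columns
(in the paper's right-to-left numbering, these are the columns with Lean index `≥ n - j`)
equals `[n-j choose k-w_j]_q`, where `w_j` is the number of pivots of `X` among those
columns. -/
theorem card_subspaces_with_ext_prefix (Fq : Type) [Field Fq] [Fintype Fq]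
    (n k j : ℕ) (hk : k ≤ n) (hj : j ≤ n)
    (M : Matrix (Fin k) (Fin n) Fq) (piv : Fin k → Fin n) (hM : IsRREF M piv) :
    (Nat.card {Y : Submodule Fq (Fin n → Fq) //
        ∃ (N : Matrix (Fin k) (Fin n) Fq) (piv' : Fin k → Fin n),
          IsRREF N piv' ∧ Submodule.span Fq (Set.range fun i => N i) = Y ∧
          ∀ c : Fin n, n - j ≤ (c : ℕ) →
            (((∃ i, piv' i = c) ↔ (∃ i, piv i = c)) ∧ ∀ i, N i c = M i c) } : ℚ)
      = gaussQ (Fintype.card Fq) (n - j)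
          (k - (Finset.univ.filter (fun i => n - j ≤ (piv i : ℕ))).card) := by
  classical
  have key : Nat.card {p : Matrix (Fin k) (Fin n) Fq × (Fin k → Fin n) //
      IsRREF p.1 p.2 ∧ ∀ c : Fin n, n - j ≤ (c:ℕ) →
        (((∃ i, p.2 i = c) ↔ (∃ i, piv i = c)) ∧ ∀ i, p.1 i c = M i c)}
      = Nat.card {Y : Submodule Fq (Fin n → Fq) //
        ∃ (N : Matrix (Fin k) (Fin n) Fq) (piv' : Fin k → Fin n),
          IsRREF N piv' ∧ Submodule.span Fq (Set.range fun i => N i) = Y ∧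
          ∀ c : Fin n, n - j ≤ (c : ℕ) →
            (((∃ i, piv' i = c) ↔ (∃ i, piv i = c)) ∧ ∀ i, N i c = M i c)} := by
    apply Nat.card_eq_of_bijective (fun p =>
      ⟨Submodule.span Fq (Set.range fun i => p.1.1 i), p.1.1, p.1.2, p.2.1, rfl, p.2.2⟩)
    constructor
    · rintro p1 p2 heq
      rw [Subtype.ext_iff] at heq
      have hspan : Submodule.span Fq (Set.range fun i => p1.1.1 i)
          = Submodule.span Fq (Set.range fun i => p2.1.1 i) := heq
      obtain ⟨hN, hpiv⟩ := RREFAux.rref_unique p1.2.1 p2.2.1 hspan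
      apply Subtype.ext
      exact Prod.ext hN hpiv
    · rintro ⟨Y, N, piv', hr, hspan, hpre⟩
      exact ⟨⟨(N, piv'), hr, hpre⟩, Subtype.ext hspan⟩
  rw [← key, RREFAux.card_prefix hM]
  exact RREFAux.card_RREFs (n - j) (k - (Finset.univ.filter (fun i => n - j ≤ (piv i : ℕ))).card)
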